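/- Let N ≥ 1, let ζ = exp(2πi/N), and let ε be a complex number with ε^N = (−1)^{N−1}. Let D = ε·diag(1, ζ, ζ², …, ζ^{N−1}) be the scaled clock matrix and let S be ε times the cyclic shift matrix (the matrix with (i,j)-entry ε when i ≡ j+1 mod N and 0 otherwise). Then: (i) D and S lie in SU(N) and satisfy D S D⁻¹ S⁻¹ = ζ·1; (ii) every pair (A, B) of elements of SU(N) satisfying A B A⁻¹ B⁻¹ = ζ·1 is simultaneously conjugate to (D, S), i.e. there exists U ∈ SU(N) with A = U D U⁻¹ and B = U S U⁻¹. In particular the set of such pairs is a single orbit of SU(N) acting by simultaneous conjugation. -/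

import Mathlib

open Matrix Complex Finset

lemma abs_eq_one_of_pow {z : ℂ} {m : ℕ} (hm : m ≠ 0) (h : ‖z ^ m‖ = 1) :
    ‖z‖ = 1 := by
  rw [norm_pow] at h
  exact (pow_left_inj₀ (norm_nonneg z) zero_le_one hm).mp (by rw [h, one_pow])

lemma conj_mul_self_of_abs_one {z : ℂ} (h : ‖z‖ = 1) :
    (starRingEnd ℂ) z * z = 1 := by
  have h2 : Complex.normSq z = 1 := by
    have := Complex.sq_norm z
    rw [h] at this; simpa using this.symm
  rw [← Complex.normSq_eq_conj_mul_self, h2, Complex.ofReal_one]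

lemma det_shift_aux {N : ℕ} (hN : N ≠ 0) (d : Fin N → ℂ) :
    Matrix.det (Matrix.of fun i j : Fin N => if (i:ℕ) = ((j:ℕ)+1) % N then d j else 0)
      = (-1)^(N-1) * ∏ j, d j := by
  obtain ⟨n, rfl⟩ := Nat.exists_eq_succ_of_ne_zero hN
  have key : ∀ j : Fin (n+1), (((j:ℕ)+1) % (n+1)) = ((j+1 : Fin (n+1)) : ℕ) := by
    intro j
    rw [Fin.add_def]
    simp only [Fin.val_one', Nat.add_mod_mod]
  have hmat : (Matrix.of fun i j : Fin (n+1) => if (i:ℕ) = ((j:ℕ)+1) % (n+1) then d j else 0)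
      = ((finRotate (n+1)).permMatrix ℂ)ᵀ * Matrix.diagonal d := by
    ext i j
    rw [Matrix.mul_apply, Finset.sum_eq_single j]
    · have h2 : (finRotate (n+1)) j = j + 1 := finRotate_succ_apply j
      simp only [Matrix.of_apply, Matrix.transpose_apply, Equiv.Perm.permMatrix,
        PEquiv.toMatrix_apply, Equiv.toPEquiv_apply, Matrix.diagonal_apply_eq, h2, key j,
        Option.mem_def, Option.some.injEq]
      by_cases h3 : i = j + 1
      · simp [h3, Fin.ext_iff]
      · rw [if_neg (fun hh => h3 (Fin.ext hh)), if_neg (fun hh => h3 hh.symm), zero_mul]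
    · intro b _ hb; rw [Matrix.diagonal_apply_ne _ hb, mul_zero]
    · simp
  rw [hmat, Matrix.det_mul, Matrix.det_transpose, Matrix.det_permutation, sign_finRotate,
    Matrix.det_diagonal]
  push_cast
  simp

lemma prod_zeta_pow {N : ℕ} (hN : N ≠ 0)
    {ζ : ℂ} (hζ : ζ = Complex.exp (2 * (Real.pi : ℂ) * Complex.I / (N : ℂ))) :
    ∏ i : Fin N, ζ ^ (i : ℕ) = (-1 : ℂ) ^ (N - 1) := by
  have hNC : (N : ℂ) ≠ 0 := Nat.cast_ne_zero.mpr hN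
  have h1 : ∏ i : Fin N, ζ ^ (i : ℕ) = ζ ^ (∑ i : Fin N, (i : ℕ)) := by
    rw [Finset.prod_pow_eq_pow_sum]
  have hsum : (∑ i : Fin N, (i : ℕ)) = N * (N - 1) / 2 := by
    rw [Fin.sum_univ_eq_sum_range (fun i => i) N, Finset.sum_range_id]
  have heven : 2 * (N * (N - 1) / 2) = N * (N - 1) := by
    refine Nat.two_mul_div_two_of_even ?_
    cases N with
    | zero => simp
    | succ n => simpa [Nat.succ_sub_one, Nat.mul_comm] using Nat.even_mul_succ_self n
  have h2 : (2:ℂ) * ((N * (N - 1) / 2 : ℕ) : ℂ) = (N : ℂ) * ((N - 1 : ℕ) : ℂ) := by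
    exact_mod_cast congrArg (Nat.cast : ℕ → ℂ) heven
  rw [h1, hsum, hζ, ← Complex.exp_nat_mul]
  have harg : ((N * (N - 1) / 2 : ℕ) : ℂ) * (2 * (Real.pi : ℂ) * Complex.I / (N : ℂ))
      = ((N - 1 : ℕ) : ℂ) * ((Real.pi : ℂ) * Complex.I) := by
    calc ((N * (N - 1) / 2 : ℕ) : ℂ) * (2 * (Real.pi : ℂ) * Complex.I / (N : ℂ))
        = ((2:ℂ) * ((N * (N - 1) / 2 : ℕ) : ℂ)) * ((Real.pi : ℂ) * Complex.I) / (N : ℂ) := by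
          ring
      _ = ((N : ℂ) * ((N - 1 : ℕ) : ℂ)) * ((Real.pi : ℂ) * Complex.I) / (N : ℂ) := by rw [h2]
      _ = ((N - 1 : ℕ) : ℂ) * ((Real.pi : ℂ) * Complex.I) := by
          field_simp
  rw [harg, Complex.exp_nat_mul, Complex.exp_pi_mul_I]

lemma dot_preserve {N : ℕ} {M : Matrix (Fin N) (Fin N) ℂ} (hM : Mᴴ * M = 1)
    (x y : Fin N → ℂ) : star (M *ᵥ x) ⬝ᵥ (M *ᵥ y) = star x ⬝ᵥ y := by
  rw [Matrix.star_mulVec, Matrix.dotProduct_mulVec, Matrix.vecMul_vecMul, hM,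
    Matrix.vecMul_one]

lemma star_dot_self_eq_zero_iff {N : ℕ} {x : Fin N → ℂ} : star x ⬝ᵥ x = 0 ↔ x = 0 := by
  have hre : star x ⬝ᵥ x = ((∑ i, Complex.normSq (x i) : ℝ) : ℂ) := by
    simp only [dotProduct, Pi.star_apply, Complex.ofReal_sum]
    refine Finset.sum_congr rfl fun i _ => ?_
    rw [Complex.normSq_eq_conj_mul_self]
    rfl
  rw [hre]
  constructor
  · intro h
    have h0 : (∑ i, Complex.normSq (x i) : ℝ) = 0 := by exact_mod_cast h
    have := (Finset.sum_eq_zero_iff_of_nonneg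
      (fun i _ => Complex.normSq_nonneg (x i))).mp h0
    funext i
    exact Complex.normSq_eq_zero.mp (this i (Finset.mem_univ i))
  · intro h; subst h; simp

lemma eigen_orthogonal {N : ℕ} {M : Matrix (Fin N) (Fin N) ℂ} (hM : Mᴴ * M = 1)
    {x y : Fin N → ℂ} {a b : ℂ}
    (hx : M *ᵥ x = a • x) (hy : M *ᵥ y = b • y) (hx0 : x ≠ 0) (hab : a ≠ b) :
    star x ⬝ᵥ y = 0 := by
  have hxx : star x ⬝ᵥ x ≠ 0 := fun h => hx0 (star_dot_self_eq_zero_iff.mp h)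
  have h1 : (starRingEnd ℂ) a * a * (star x ⬝ᵥ x) = star x ⬝ᵥ x := by
    have := dot_preserve hM x x
    rwa [hx, star_smul, smul_dotProduct, dotProduct_smul, smul_eq_mul,
      smul_eq_mul, ← mul_assoc] at this
  have ha : (starRingEnd ℂ) a * a = 1 := by
    have h1' : (starRingEnd ℂ) a * a * (star x ⬝ᵥ x) = 1 * (star x ⬝ᵥ x) := by
      rw [h1, one_mul]
    exact mul_right_cancel₀ hxx h1'
  have h2 : ((starRingEnd ℂ) a * b) * (star x ⬝ᵥ y) = star x ⬝ᵥ y := by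
    have := dot_preserve hM x y
    rwa [hx, hy, star_smul, smul_dotProduct, dotProduct_smul, smul_eq_mul,
      smul_eq_mul, ← mul_assoc] at this
  have hne : (starRingEnd ℂ) a * b ≠ 1 := by
    intro hcon
    have ha0 : a ≠ 0 := by
      intro h0; rw [h0, map_zero, zero_mul] at ha; exact zero_ne_one ha
    have : (starRingEnd ℂ) a * a = (starRingEnd ℂ) a * b := by rw [ha, hcon]
    exact hab (mul_left_cancel₀ (by simpa using ha0) this)
  by_contra hxy
  have h2' : ((starRingEnd ℂ) a * b) * (star x ⬝ᵥ y) = 1 * (star x ⬝ᵥ y) := by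
    rw [h2, one_mul]
  exact hne (mul_right_cancel₀ hxy h2')

lemma pow_conjTranspose_mul_self {N : ℕ} {B : Matrix (Fin N) (Fin N) ℂ}
    (hB : Bᴴ * B = 1) (m : ℕ) : (B ^ m)ᴴ * B ^ m = 1 := by
  induction m with
  | zero => simp
  | succ n ih =>
    rw [pow_succ, Matrix.conjTranspose_mul]
    calc Bᴴ * (B ^ n)ᴴ * ((B ^ n) * B) = Bᴴ * ((B ^ n)ᴴ * (B ^ n)) * B := by
          simp only [Matrix.mul_assoc]
      _ = 1 := by rw [ih, Matrix.mul_one, hB]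

lemma comm_pow {N : ℕ} {A B : Matrix (Fin N) (Fin N) ℂ} {ζ : ℂ}
    (hAB : A * B = ζ • (B * A)) (m : ℕ) : A * B ^ m = ζ ^ m • (B ^ m * A) := by
  induction m with
  | zero => simp
  | succ n ih =>
    rw [pow_succ, ← Matrix.mul_assoc, ih, Matrix.smul_mul, Matrix.mul_assoc, hAB,
      pow_succ]
    rw [Matrix.mul_smul, smul_smul, Matrix.mul_assoc]

theorem key {N : ℕ} (hN : N ≠ 0) {ζ : ℂ} (hζp : IsPrimitiveRoot ζ N)
    {A B : Matrix (Fin N) (Fin N) ℂ} (hA : Aᴴ * A = 1) (hB : Bᴴ * B = 1)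
    (hAB : A * B = ζ • (B * A))
    {w : Fin N → ℂ} {μ c : ℂ}
    (hw : A *ᵥ w = μ • w) (hw1 : star w ⬝ᵥ w = 1) (hc : (starRingEnd ℂ) c * c = 1)
    (f : Fin N → (Fin N → ℂ)) (hf : f = fun k : Fin N => c ^ (k : ℕ) • ((B ^ (k : ℕ)) *ᵥ w))
    (U : Matrix (Fin N) (Fin N) ℂ) (hU : U = Matrix.of (fun i k => f k i)) :
    (∀ k l : Fin N, star (f k) ⬝ᵥ f l = if k = l then 1 else 0)
    ∧ (∀ k : Fin N, A *ᵥ f k = (ζ ^ (k : ℕ) * μ) • f k)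
    ∧ Uᴴ * U = 1
    ∧ A * U = U * Matrix.diagonal (fun k : Fin N => ζ ^ (k : ℕ) * μ) := by
  have hw0 : w ≠ 0 := by
    intro h0; rw [h0] at hw1; simp at hw1
  have hμ0 : μ ≠ 0 := by
    intro h0
    have := dot_preserve hA w w
    rw [hw, h0, zero_smul] at this
    simp [hw1] at this
  -- eigenvector property for B^m w
  have eig : ∀ m : ℕ, A *ᵥ ((B ^ m) *ᵥ w) = (ζ ^ m * μ) • ((B ^ m) *ᵥ w) := by
    intro m
    rw [Matrix.mulVec_mulVec, comm_pow hAB m, Matrix.smul_mulVec,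
      ← Matrix.mulVec_mulVec, hw, Matrix.mulVec_smul, smul_smul]
  have eigf : ∀ k : Fin N, A *ᵥ f k = (ζ ^ (k : ℕ) * μ) • f k := by
    intro k
    rw [hf]
    show A *ᵥ (c ^ (k : ℕ) • ((B ^ (k : ℕ)) *ᵥ w)) = _
    rw [Matrix.mulVec_smul, eig, smul_comm]
  -- orthonormality of the unscaled family, for k ≤ l (as naturals)
  have dots0 : ∀ m : ℕ, m < N → star w ⬝ᵥ ((B ^ m) *ᵥ w) = if m = 0 then 1 else 0 := by
    intro m hm
    by_cases h0 : m = 0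
    · simp [h0, hw1]
    · rw [if_neg h0]
      refine eigen_orthogonal hA hw (eig m) hw0 ?_
      intro hcon
      have : ζ ^ m = 1 := by
        have h' : ζ ^ m * μ = 1 * μ := by rw [one_mul]; exact hcon.symm
        exact mul_right_cancel₀ hμ0 h'
      exact h0 (Nat.eq_zero_of_dvd_of_lt ((hζp.pow_eq_one_iff_dvd m).mp this) hm)
  -- full orthonormality
  have dots_le : ∀ k l : Fin N, (k : ℕ) ≤ (l : ℕ) →
      star (f k) ⬝ᵥ f l = if k = l then 1 else 0 := by
    intro k l hkl
    have hBl : (B ^ (l : ℕ)) *ᵥ w = (B ^ (k : ℕ)) *ᵥ ((B ^ ((l : ℕ) - (k : ℕ))) *ᵥ w) := by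
      rw [Matrix.mulVec_mulVec, ← pow_add, Nat.add_sub_cancel' hkl]
    have hstep : star ((B ^ (k : ℕ)) *ᵥ w) ⬝ᵥ ((B ^ (l : ℕ)) *ᵥ w)
        = if ((l : ℕ) - (k : ℕ)) = 0 then 1 else 0 := by
      rw [hBl, dot_preserve (pow_conjTranspose_mul_self hB (k : ℕ))]
      exact dots0 _ (lt_of_le_of_lt (Nat.sub_le _ _) l.isLt)
    rw [hf]
    show star (c ^ (k : ℕ) • ((B ^ (k : ℕ)) *ᵥ w)) ⬝ᵥ (c ^ (l : ℕ) • ((B ^ (l : ℕ)) *ᵥ w)) = _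
    rw [star_smul, smul_dotProduct, dotProduct_smul, hstep]
    by_cases hkeq : k = l
    · subst hkeq
      rw [if_pos rfl, if_pos (Nat.sub_self _)]
      simp only [smul_eq_mul, mul_one, star_pow]
      rw [← mul_pow]
      show ((starRingEnd ℂ) c * c) ^ (k : ℕ) = 1
      rw [hc, one_pow]
    · have hne : (l : ℕ) - (k : ℕ) ≠ 0 := by
        intro h0; exact hkeq (Fin.ext (by omega))
      rw [if_neg hkeq, if_neg hne, smul_zero, smul_zero]
  have dots : ∀ k l : Fin N, star (f k) ⬝ᵥ f l = if k = l then 1 else 0 := by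
    intro k l
    rcases le_or_gt (k : ℕ) (l : ℕ) with h | h
    · exact dots_le k l h
    · have h1 := dots_le l k (le_of_lt h)
      have h2 : star (star (f l) ⬝ᵥ f k) = star (f k) ⬝ᵥ f l := by
        rw [Matrix.star_dotProduct, star_star]
      rw [← h2, h1]
      have hne : l ≠ k := fun hc' => by subst hc'; omega
      have hne' : k ≠ l := fun hc' => hne hc'.symm
      rw [if_neg hne, if_neg hne', star_zero]
  have hUU : Uᴴ * U = 1 := by
    ext k l
    have h1 : (Uᴴ * U) k l = star (f k) ⬝ᵥ f l := by
      rw [Matrix.mul_apply]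
      simp only [Matrix.conjTranspose_apply, hU, Matrix.of_apply, dotProduct, Pi.star_apply]
    rw [h1, dots k l, Matrix.one_apply]
  have hAU : A * U = U * Matrix.diagonal (fun k : Fin N => ζ ^ (k : ℕ) * μ) := by
    ext i k
    have h1 : (A * U) i k = (A *ᵥ f k) i := by
      rw [Matrix.mul_apply]
      simp only [hU, Matrix.of_apply, Matrix.mulVec, dotProduct]
    rw [h1, eigf k, Matrix.mul_diagonal, hU]
    simp only [Matrix.of_apply, Pi.smul_apply, smul_eq_mul]
    ring
  exact ⟨dots, eigf, hUU, hAU⟩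

lemma exists_unit_eigenvector {N : ℕ} {M : Matrix (Fin N) (Fin N) ℂ} {μ : ℂ} {v : Fin N → ℂ}
    (hv : M *ᵥ v = μ • v) (hv0 : v ≠ 0) :
    ∃ w : Fin N → ℂ, star w ⬝ᵥ w = 1 ∧ M *ᵥ w = μ • w := by
  have hre : star v ⬝ᵥ v = ((∑ i, Complex.normSq (v i) : ℝ) : ℂ) := by
    simp only [dotProduct, Pi.star_apply, Complex.ofReal_sum]
    refine Finset.sum_congr rfl fun i _ => ?_
    rw [Complex.normSq_eq_conj_mul_self]
    rfl
  set r : ℝ := ∑ i, Complex.normSq (v i) with hr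
  have hrpos : 0 < r := by
    rcases lt_or_eq_of_le (Finset.sum_nonneg fun i _ => Complex.normSq_nonneg (v i)) with h | h
    · exact h
    · exfalso
      apply hv0
      apply star_dot_self_eq_zero_iff.mp
      rw [hre, hr, ← h, Complex.ofReal_zero]
  set t : ℝ := Real.sqrt r with ht
  have ht0 : t ≠ 0 := ne_of_gt (Real.sqrt_pos.mpr hrpos)
  refine ⟨((t⁻¹ : ℝ) : ℂ) • v, ?_, ?_⟩
  · rw [star_smul, smul_dotProduct, dotProduct_smul, hre]
    simp only [smul_eq_mul, star_trivial, ← Complex.ofReal_inv]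
    rw [Complex.star_def, Complex.conj_ofReal, ← Complex.ofReal_mul, ← Complex.ofReal_mul]
    rw [show t⁻¹ * (t⁻¹ * r) = r / t ^ 2 by rw [pow_two]; field_simp]
    rw [ht, Real.sq_sqrt (le_of_lt hrpos), div_self (ne_of_gt hrpos), Complex.ofReal_one]
  · rw [Matrix.mulVec_smul, hv, smul_comm]

/-- The scaled clock matrix `D` and shift matrix `S` lie in `SU(N)` and satisfy
`D S D⁻¹ S⁻¹ = ζ • 1` with `ζ = exp(2πi/N)`, and every pair `(A, B)` in `SU(N)` with
`A B A⁻¹ B⁻¹ = ζ • 1` is simultaneously conjugate to `(D, S)` by an element of `SU(N)`. -/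
theorem clock_shift_classification
    (N : ℕ) (hN : 1 ≤ N)
    (ζ ε : ℂ) (hζ : ζ = Complex.exp (2 * (Real.pi : ℂ) * Complex.I / (N : ℂ)))
    (hε : ε ^ N = (-1 : ℂ) ^ (N - 1))
    (D S : Matrix (Fin N) (Fin N) ℂ)
    (hD : D = ε • Matrix.diagonal (fun i : Fin N => ζ ^ (i : ℕ)))
    (hS : S = Matrix.of (fun i j : Fin N => if (i : ℕ) = ((j : ℕ) + 1) % N then ε else 0)) :
    (D ∈ Matrix.specialUnitaryGroup (Fin N) ℂ
      ∧ S ∈ Matrix.specialUnitaryGroup (Fin N) ℂ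
      ∧ D * S * D⁻¹ * S⁻¹ = ζ • (1 : Matrix (Fin N) (Fin N) ℂ))
    ∧ (∀ A B : Matrix (Fin N) (Fin N) ℂ,
        A ∈ Matrix.specialUnitaryGroup (Fin N) ℂ →
        B ∈ Matrix.specialUnitaryGroup (Fin N) ℂ →
        A * B * A⁻¹ * B⁻¹ = ζ • (1 : Matrix (Fin N) (Fin N) ℂ) →
        ∃ U ∈ Matrix.specialUnitaryGroup (Fin N) ℂ, A = U * D * U⁻¹ ∧ B = U * S * U⁻¹) := by
  haveI : NeZero N := ⟨by omega⟩
  have hN0 : N ≠ 0 := by omega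
  have hζp : IsPrimitiveRoot ζ N := hζ ▸ Complex.isPrimitiveRoot_exp N hN0
  have hζN : ζ ^ N = 1 := hζp.pow_eq_one
  have hm1 : ((-1 : ℂ) ^ (N - 1)) * ((-1 : ℂ) ^ (N - 1)) = 1 := by
    rw [← pow_add, ← two_mul, pow_mul]; norm_num
  have habsε : ‖ε‖ = 1 := by
    refine abs_eq_one_of_pow hN0 ?_
    rw [hε, norm_pow]
    simp
  have hεu : (starRingEnd ℂ) ε * ε = 1 := conj_mul_self_of_abs_one habsε
  have hε0 : ε ≠ 0 := by
    intro h0; rw [h0] at habsε; simp at habsε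
  have habsζ : ‖ζ‖ = 1 := abs_eq_one_of_pow hN0 (by rw [hζN]; simp)
  have hζu : (starRingEnd ℂ) ζ * ζ = 1 := conj_mul_self_of_abs_one habsζ
  have hpowmod : ∀ a : ℕ, ζ ^ (a % N) = ζ ^ a := by
    intro a
    conv_rhs => rw [← Nat.mod_add_div a N]
    rw [pow_add, pow_mul, hζN, one_pow, mul_one]
  have hvaladd : ∀ j : Fin N, ((j + 1 : Fin N) : ℕ) = ((j : ℕ) + 1) % N := by
    intro j
    rw [Fin.add_def]
    show ((j : ℕ) + ((1 : Fin N) : ℕ)) % N = _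
    rw [Fin.val_one', Nat.add_mod_mod]
  have hScond : ∀ i j : Fin N, ((i : ℕ) = ((j : ℕ) + 1) % N) ↔ i = j + 1 := by
    intro i j
    rw [Fin.ext_iff, hvaladd]
  have hSij : ∀ i j, S i j = if i = j + 1 then ε else 0 := by
    intro i j
    rw [hS, Matrix.of_apply, if_congr (hScond i j) rfl rfl]
  -- D facts
  have hDdiag : D = Matrix.diagonal (fun i : Fin N => ε * ζ ^ (i : ℕ)) := by
    rw [hD, ← Matrix.diagonal_smul]
    congr 1
  have hDdet : D.det = 1 := by
    rw [hDdiag, Matrix.det_diagonal, Finset.prod_mul_distrib, Finset.prod_const,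
      Finset.card_univ, Fintype.card_fin, prod_zeta_pow hN0 hζ, hε, hm1]
  have hεu' : star ε * ε = 1 := hεu
  have hζu' : star ζ * ζ = 1 := hζu
  have hDH : Dᴴ * D = 1 := by
    have h1 : Dᴴ * D
        = Matrix.diagonal (fun i : Fin N => star (ε * ζ ^ (i:ℕ)) * (ε * ζ ^ (i:ℕ))) := by
      rw [hDdiag, Matrix.diagonal_conjTranspose, Matrix.diagonal_mul_diagonal]
      rfl
    rw [h1, ← Matrix.diagonal_one]
    apply congrArg Matrix.diagonal
    funext i
    calc star (ε * ζ ^ (i:ℕ)) * (ε * ζ ^ (i:ℕ))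
        = (star ε * ε) * ((star ζ * ζ) ^ (i:ℕ)) := by
          rw [star_mul', star_pow, mul_pow]; ring
      _ = 1 := by rw [hεu', hζu', one_pow, mul_one]
  -- S facts
  have hSdet : S.det = 1 := by
    rw [hS, det_shift_aux hN0, Finset.prod_const, Finset.card_univ, Fintype.card_fin, hε, hm1]
  have hSH : Sᴴ * S = 1 := by
    ext j k
    rw [Matrix.mul_apply]
    have hterm : ∀ i, Sᴴ j i * S i k
        = if i = j + 1 then (if i = k + 1 then star ε * ε else 0) else 0 := by
      intro i
      rw [Matrix.conjTranspose_apply, hSij i j, hSij i k]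
      by_cases h1 : i = j + 1
      · rw [if_pos h1, if_pos h1, mul_ite, mul_zero]
      · rw [if_neg h1, if_neg h1, star_zero, zero_mul]
    simp_rw [hterm]
    rw [Finset.sum_ite_eq' Finset.univ (j + 1)
      (fun i => if i = k + 1 then star ε * ε else 0)]
    simp only [Finset.mem_univ, if_true]
    by_cases h : j = k
    · subst h; rw [if_pos rfl, hεu', Matrix.one_apply_eq]
    · rw [if_neg (by simpa using h), Matrix.one_apply_ne h]
  -- commutator
  have hDS : D * S = ζ • (S * D) := by
    ext i j
    rw [hDdiag, Matrix.diagonal_mul, Matrix.smul_apply, Matrix.mul_diagonal, hSij i j]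
    by_cases h : i = j + 1
    · rw [if_pos h, smul_eq_mul]
      have hival : (i : ℕ) = ((j : ℕ) + 1) % N := (hScond i j).mpr h
      rw [hival, hpowmod, pow_succ]
      ring
    · rw [if_neg h, mul_zero, zero_mul, smul_eq_mul, mul_zero]
  have hDu : IsUnit D.det := by rw [hDdet]; exact isUnit_one
  have hSu : IsUnit S.det := by rw [hSdet]; exact isUnit_one
  refine ⟨⟨Matrix.mem_specialUnitaryGroup_iff.mpr
      ⟨Matrix.mem_unitaryGroup_iff'.mpr (by rw [Matrix.star_eq_conjTranspose, hDH]), hDdet⟩,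
    Matrix.mem_specialUnitaryGroup_iff.mpr
      ⟨Matrix.mem_unitaryGroup_iff'.mpr (by rw [Matrix.star_eq_conjTranspose, hSH]), hSdet⟩, ?_⟩, ?_⟩
  calc D * S * D⁻¹ * S⁻¹ = (ζ • (S * D)) * D⁻¹ * S⁻¹ := by rw [hDS]
    _ = ζ • (S * (D * D⁻¹) * S⁻¹) := by
        simp only [Matrix.smul_mul, Matrix.mul_assoc]
    _ = ζ • (1 : Matrix (Fin N) (Fin N) ℂ) := by
        rw [Matrix.mul_nonsing_inv _ hDu, Matrix.mul_one, Matrix.mul_nonsing_inv _ hSu]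
  intro A B hAmem hBmem hcomm
  obtain ⟨hAu, hAdet⟩ := Matrix.mem_specialUnitaryGroup_iff.mp hAmem
  obtain ⟨hBu, hBdet⟩ := Matrix.mem_specialUnitaryGroup_iff.mp hBmem
  have hAH : Aᴴ * A = 1 := by
    rw [← Matrix.star_eq_conjTranspose]; exact Matrix.mem_unitaryGroup_iff'.mp hAu
  have hBH : Bᴴ * B = 1 := by
    rw [← Matrix.star_eq_conjTranspose]; exact Matrix.mem_unitaryGroup_iff'.mp hBu
  have hAisu : IsUnit A.det := by rw [hAdet]; exact isUnit_one
  have hBisu : IsUnit B.det := by rw [hBdet]; exact isUnit_one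
  -- commutation relation
  have hAB : A * B = ζ • (B * A) := by
    have h1 : A * B * A⁻¹ = ζ • B := by
      calc A * B * A⁻¹ = A * B * A⁻¹ * (B⁻¹ * B) := by
            rw [Matrix.nonsing_inv_mul B hBisu, Matrix.mul_one]
        _ = (A * B * A⁻¹ * B⁻¹) * B := by simp only [Matrix.mul_assoc]
        _ = (ζ • (1 : Matrix (Fin N) (Fin N) ℂ)) * B := by rw [hcomm]
        _ = ζ • B := by rw [Matrix.smul_mul, Matrix.one_mul]
    calc A * B = A * B * (A⁻¹ * A) := by
          rw [Matrix.nonsing_inv_mul A hAisu, Matrix.mul_one]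
      _ = (A * B * A⁻¹) * A := by simp only [Matrix.mul_assoc]
      _ = (ζ • B) * A := by rw [h1]
      _ = ζ • (B * A) := by rw [Matrix.smul_mul]
  -- eigenvector of A
  haveI : Nonempty (Fin N) := ⟨⟨0, by omega⟩⟩
  obtain ⟨μ₀, hμ₀⟩ := Module.End.exists_eigenvalue (Matrix.mulVecLin A)
  obtain ⟨v₀, hv₀⟩ := hμ₀.exists_hasEigenvector
  have hv₀eq : A *ᵥ v₀ = μ₀ • v₀ := by
    have := Module.End.mem_eigenspace_iff.mp hv₀.1
    simpa [Matrix.mulVecLin_apply] using this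
  obtain ⟨w, hw1, hweq⟩ := exists_unit_eigenvector hv₀eq hv₀.2
  -- pass 1
  have hone : (starRingEnd ℂ) (1:ℂ) * 1 = 1 := by simp
  obtain ⟨dots₀, eigf₀, hU₀U, hAU₀⟩ := key hN0 hζp hAH hBH hAB hweq hw1 hone
    (fun k : Fin N => (1:ℂ) ^ (k : ℕ) • ((B ^ (k : ℕ)) *ᵥ w)) rfl
    (Matrix.of (fun i k => ((fun k : Fin N => (1:ℂ) ^ (k : ℕ) • ((B ^ (k : ℕ)) *ᵥ w)) k i))) rfl
  set U₀ : Matrix (Fin N) (Fin N) ℂ :=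
    Matrix.of (fun i k => ((fun k : Fin N => (1:ℂ) ^ (k : ℕ) • ((B ^ (k : ℕ)) *ᵥ w)) k i)) with hU₀
  have hdetU₀u : star U₀.det * U₀.det = 1 := by
    have := congrArg Matrix.det hU₀U
    rwa [Matrix.det_mul, Matrix.det_conjTranspose, Matrix.det_one] at this
  have hdetU₀0 : U₀.det ≠ 0 := by
    intro h0; rw [h0, mul_zero] at hdetU₀u; exact zero_ne_one hdetU₀u
  have hdetdiag : Matrix.det (Matrix.diagonal (fun k : Fin N => ζ ^ (k : ℕ) * μ₀)) = 1 := by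
    have h2 := congrArg Matrix.det hAU₀
    rw [Matrix.det_mul, Matrix.det_mul, hAdet, one_mul] at h2
    have h3 : U₀.det * 1 = U₀.det * Matrix.det (Matrix.diagonal fun k : Fin N => ζ ^ (k:ℕ) * μ₀) := by
      rw [mul_one]; exact h2
    exact (mul_left_cancel₀ hdetU₀0 h3).symm
  have hμ₀N : μ₀ ^ N = (-1 : ℂ) ^ (N - 1) := by
    rw [Matrix.det_diagonal, Finset.prod_mul_distrib, Finset.prod_const, Finset.card_univ,
      Fintype.card_fin, prod_zeta_pow hN0 hζ] at hdetdiag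
    calc μ₀ ^ N = ((-1:ℂ)^(N-1) * (-1:ℂ)^(N-1)) * μ₀ ^ N := by rw [hm1, one_mul]
      _ = (-1:ℂ)^(N-1) * ((-1:ℂ)^(N-1) * μ₀ ^ N) := by ring
      _ = (-1:ℂ)^(N-1) := by rw [hdetdiag, mul_one]
  have hroot : (μ₀ * ε⁻¹) ^ N = 1 := by
    rw [mul_pow, hμ₀N, inv_pow, hε, mul_inv_cancel₀]
    intro h0
    rw [h0] at hm1; rw [mul_zero] at hm1; exact zero_ne_one hm1
  obtain ⟨j, hjN, hjeq⟩ := hζp.eq_pow_of_pow_eq_one hroot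
  have hμ₀eq : μ₀ = ε * ζ ^ j := by
    have : ζ ^ j * ε = μ₀ * ε⁻¹ * ε := by rw [hjeq]
    rw [mul_assoc, inv_mul_cancel₀ hε0, mul_one] at this
    rw [← this]; ring
  set m : Fin N := ⟨(N - j) % N, Nat.mod_lt _ (by omega)⟩ with hm
  set v : Fin N → ℂ := (1:ℂ) ^ ((m : Fin N) : ℕ) • ((B ^ ((m : Fin N) : ℕ)) *ᵥ w) with hv
  have hv1 : star v ⬝ᵥ v = 1 := by
    have := dots₀ m m
    rwa [if_pos rfl] at this
  have hveig : A *ᵥ v = ε • v := by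
    have h1 := eigf₀ m
    rw [hμ₀eq] at h1
    have hz : ζ ^ ((m : Fin N) : ℕ) * (ε * ζ ^ j) = ε := by
      show ζ ^ ((N - j) % N) * (ε * ζ ^ j) = ε
      rw [hpowmod, ← mul_assoc, mul_comm (ζ ^ (N - j)) ε, mul_assoc, ← pow_add]
      have hNj : N - j + j = N := by omega
      rw [hNj, hζN, mul_one]
    rwa [hz] at h1
  -- pass 2
  have hρ : (starRingEnd ℂ) (ε⁻¹) * ε⁻¹ = 1 := by
    rw [map_inv₀, ← mul_inv, hεu, inv_one]
  set f : Fin N → (Fin N → ℂ) := fun k : Fin N => (ε⁻¹) ^ (k : ℕ) • ((B ^ (k : ℕ)) *ᵥ v) with hf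
  set U : Matrix (Fin N) (Fin N) ℂ := Matrix.of (fun i k => f k i) with hU
  obtain ⟨dots, eigf, hUU, hAU⟩ := key hN0 hζp hAH hBH hAB hveig hv1 hρ f hf U hU
  have hAU' : A * U = U * D := by
    rw [hAU, hDdiag]
    congr 1
    apply congrArg Matrix.diagonal
    funext k
    ring
  have hUUstar : U * Uᴴ = 1 := mul_eq_one_comm.mp hUU
  -- the matrix T
  set T : Matrix (Fin N) (Fin N) ℂ := Uᴴ * B * U with hT
  have hTentry : ∀ i j : Fin N, T i j = star (f i) ⬝ᵥ (B *ᵥ f j) := by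
    intro i j
    rw [hT, Matrix.mul_assoc, Matrix.mul_apply]
    simp only [Matrix.conjTranspose_apply, hU, Matrix.of_apply, Matrix.mul_apply,
      dotProduct, Matrix.mulVec, Pi.star_apply]
  set idx0 : Fin N := ⟨0, by omega⟩ with hidx0
  set idlast : Fin N := ⟨N - 1, by omega⟩ with hidlast
  set c₁ : ℂ := T idx0 idlast with hc₁def
  set dvec : Fin N → ℂ := fun j => if j = idlast then c₁ else ε with hdvec
  have hflast : ((idlast : Fin N) : ℕ) = N - 1 := rfl
  have hN1 : N - 1 + 1 = N := by omega
  have hfne : ∀ i : Fin N, f i ≠ 0 := by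
    intro i h0
    have hd := dots i i
    rw [if_pos rfl, h0] at hd
    simp at hd
  have hBf : ∀ jj : Fin N, ((jj : ℕ) + 1) < N → B *ᵥ f jj = ε • f (jj + 1) := by
    intro jj hjlt
    have hval : ((jj + 1 : Fin N) : ℕ) = (jj : ℕ) + 1 := by
      rw [hvaladd]; exact Nat.mod_eq_of_lt hjlt
    rw [hf]
    simp only []
    rw [hval, Matrix.mulVec_smul, Matrix.mulVec_mulVec, ← pow_succ', smul_smul]
    congr 1
    rw [pow_succ]
    field_simp
  have hy : A *ᵥ ((B ^ N) *ᵥ v) = ε • ((B ^ N) *ᵥ v) := by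
    rw [Matrix.mulVec_mulVec, comm_pow hAB N, Matrix.smul_mulVec,
      ← Matrix.mulVec_mulVec, hveig, Matrix.mulVec_smul, smul_smul, hζN, one_mul]
  have hBflast : B *ᵥ f idlast = (ε⁻¹) ^ (N - 1) • ((B ^ N) *ᵥ v) := by
    rw [hf]
    show B *ᵥ (ε⁻¹ ^ (N - 1) • ((B ^ (N - 1)) *ᵥ v)) = _
    rw [Matrix.mulVec_smul, Matrix.mulVec_mulVec, ← pow_succ', hN1]
  have hTlast : ∀ i : Fin N, i ≠ idx0 → T i idlast = 0 := by
    intro i hi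
    have hne : ζ ^ (i : ℕ) * ε ≠ ε := by
      intro hcon
      apply hi
      have h1 : ζ ^ (i : ℕ) * ε = 1 * ε := by rw [one_mul]; exact hcon
      have h2 : ζ ^ (i : ℕ) = ζ ^ 0 := by
        rw [pow_zero]; exact mul_right_cancel₀ hε0 h1
      exact Fin.ext (hζp.pow_inj i.isLt (by omega) h2)
    rw [hTentry, hBflast, dotProduct_smul,
      eigen_orthogonal hAH (eigf i) hy (hfne i) hne, smul_zero]
  have hTmid : ∀ (i jj : Fin N), jj ≠ idlast → T i jj = if i = jj + 1 then ε else 0 := by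
    intro i jj hjj
    have hjlt : (jj : ℕ) + 1 < N := by
      have h1 := jj.isLt
      have h2 : (jj : ℕ) ≠ N - 1 := by
        intro h3; exact hjj (Fin.ext (by rw [h3, hflast]))
      omega
    rw [hTentry, hBf jj hjlt, dotProduct_smul, dots i (jj + 1)]
    by_cases h : i = jj + 1 <;> simp [h]
  have hTform : T = Matrix.of (fun i jj : Fin N => if (i:ℕ) = ((jj:ℕ)+1) % N then dvec jj else 0) := by
    ext i jj
    rw [Matrix.of_apply]
    by_cases hjj : jj = idlast
    · subst hjj
      have hcond : ((i:ℕ) = (((idlast : Fin N):ℕ) + 1) % N) ↔ i = idx0 := by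
        have h1 : (((idlast : Fin N):ℕ) + 1) % N = 0 := by
          show ((N - 1) + 1) % N = 0
          rw [hN1, Nat.mod_self]
        rw [h1, Fin.ext_iff]
      by_cases hii : i = idx0
      · rw [if_pos (hcond.mpr hii), hii]
        show c₁ = dvec idlast
        rw [hdvec]
        simp
      · rw [if_neg (fun h => hii (hcond.mp h))]
        exact hTlast i hii
    · rw [hTmid i jj hjj]
      have hdv : dvec jj = ε := by rw [hdvec]; simp [hjj]
      rw [hdv, if_congr (hScond i jj).symm rfl rfl]
  have hdetUu : star U.det * U.det = 1 := by
    have := congrArg Matrix.det hUU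
    rwa [Matrix.det_mul, Matrix.det_conjTranspose, Matrix.det_one] at this
  have hdetT : T.det = 1 := by
    rw [hT, Matrix.det_mul, Matrix.det_mul, Matrix.det_conjTranspose, hBdet, mul_one, hdetUu]
  have hprodd : ∏ jj, dvec jj = c₁ * ε ^ (N - 1) := by
    rw [Finset.prod_eq_mul_prod_sdiff_singleton_of_mem (Finset.mem_univ idlast)]
    have hd1 : dvec idlast = c₁ := by rw [hdvec]; simp
    have hd2 : ∏ jj ∈ Finset.univ \ {idlast}, dvec jj = ε ^ (N - 1) := by
      rw [Finset.prod_congr rfl (fun x hx => show dvec x = ε by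
        rw [hdvec]
        simp only []
        rw [if_neg (by simpa using (Finset.mem_sdiff.mp hx).2)])]
      rw [Finset.prod_const, Finset.card_sdiff_of_subset (by simp), Finset.card_univ, Fintype.card_fin,
        Finset.card_singleton]
    rw [hd1, hd2]
  have hc₁ : c₁ = ε := by
    have h1 : (-1:ℂ)^(N-1) * (c₁ * ε^(N-1)) = 1 := by
      calc (-1:ℂ)^(N-1) * (c₁ * ε^(N-1)) = (-1:ℂ)^(N-1) * ∏ jj, dvec jj := by rw [hprodd]
        _ = Matrix.det (Matrix.of (fun i jj : Fin N =>
              if (i:ℕ) = ((jj:ℕ)+1) % N then dvec jj else 0)) := (det_shift_aux hN0 dvec).symm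
        _ = T.det := by rw [← hTform]
        _ = 1 := hdetT
    have h2 : (-1:ℂ)^(N-1) * (ε * ε^(N-1)) = 1 := by
      have hεN : ε * ε^(N-1) = ε^N := by rw [← pow_succ', hN1]
      rw [hεN, hε, hm1]
    have hne1 : ((-1:ℂ)^(N-1)) ≠ 0 := pow_ne_zero _ (by norm_num)
    have hne2 : (ε^(N-1)) ≠ 0 := pow_ne_zero _ hε0
    have h3 : c₁ * ε^(N-1) = ε * ε^(N-1) := mul_left_cancel₀ hne1 (h1.trans h2.symm)
    exact mul_right_cancel₀ hne2 h3
  have hTS : T = S := by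
    rw [hTform, hS]
    ext i jj
    simp only [Matrix.of_apply]
    have hdv : dvec jj = ε := by
      rw [hdvec]
      by_cases h : jj = idlast
      · simp [h, hc₁]
      · simp [h]
    rw [hdv]
  have hBU : B * U = U * S := by
    rw [← hTS]
    have h1 : U * T = B * U := by
      rw [hT]
      calc U * (Uᴴ * B * U) = (U * Uᴴ) * (B * U) := by simp only [Matrix.mul_assoc]
        _ = B * U := by rw [hUUstar, Matrix.one_mul]
    exact h1.symm
  -- rescale U to determinant one
  have habsdetU : ‖U.det‖ = 1 := by
    have hnsq : (Complex.normSq U.det : ℂ) = 1 := by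
      rw [Complex.normSq_eq_conj_mul_self]; exact hdetUu
    have hnsq' : Complex.normSq U.det = 1 := by exact_mod_cast hnsq
    have h2 : ‖U.det‖ ^ 2 = 1 ^ 2 := by rw [Complex.sq_norm, hnsq', one_pow]
    exact (pow_left_inj₀ (norm_nonneg _) zero_le_one two_ne_zero).mp h2
  have hdetU0 : U.det ≠ 0 := by
    intro h0; rw [h0] at habsdetU; simp at habsdetU
  obtain ⟨c₀, hc₀⟩ := IsAlgClosed.exists_pow_nat_eq (U.det)⁻¹ (n := N) (by omega)
  have habsc₀ : ‖c₀‖ = 1 := abs_eq_one_of_pow hN0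
    (by rw [hc₀, norm_inv, habsdetU, inv_one])
  have hc₀u : star c₀ * c₀ = 1 := conj_mul_self_of_abs_one habsc₀
  set U' : Matrix (Fin N) (Fin N) ℂ := c₀ • U with hU'
  have hU'H : U'ᴴ * U' = 1 := by
    rw [hU', Matrix.conjTranspose_smul, Matrix.smul_mul, Matrix.mul_smul, smul_smul, hUU,
      hc₀u, one_smul]
  have hdetU' : U'.det = 1 := by
    rw [hU', Matrix.det_smul, Fintype.card_fin, hc₀, inv_mul_cancel₀ hdetU0]
  have hU'u : IsUnit U'.det := by rw [hdetU']; exact isUnit_one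
  have hAU'2 : A * U' = U' * D := by rw [hU', Matrix.mul_smul, Matrix.smul_mul, hAU']
  have hBU'2 : B * U' = U' * S := by rw [hU', Matrix.mul_smul, Matrix.smul_mul, hBU]
  refine ⟨U', Matrix.mem_specialUnitaryGroup_iff.mpr
      ⟨Matrix.mem_unitaryGroup_iff'.mpr (by rw [Matrix.star_eq_conjTranspose, hU'H]), hdetU'⟩,
    ?_, ?_⟩
  · calc A = A * (U' * U'⁻¹) := by rw [Matrix.mul_nonsing_inv _ hU'u, Matrix.mul_one]
      _ = (A * U') * U'⁻¹ := by rw [Matrix.mul_assoc]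
      _ = U' * D * U'⁻¹ := by rw [hAU'2]
  · calc B = B * (U' * U'⁻¹) := by rw [Matrix.mul_nonsing_inv _ hU'u, Matrix.mul_one]
      _ = (B * U') * U'⁻¹ := by rw [Matrix.mul_assoc]
      _ = U' * S * U'⁻¹ := by rw [hBU'2]
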